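/- Let H(t) be a family of n×n Hermitian matrices, for t ∈ (0, t₀), of the block form H(t) = [[A(t), B(t), c(t)],[B(t)*, D(t)/t, E(t)/t],[c(t)*, E(t)*/t, d(t)/t²]] where A(t) → A (r×r Hermitian), B(t) → B, c(t) → c (r×1), D(t) → D ((n-r-1)×(n-r-1) Hermitian), E(t) → E, d(t) → d > 0 (scalar) as t → 0⁺. If the Schur complement A - c c*/d is positive definite and D is positive definite, then H(t) is positive definite for all sufficiently small t > 0. -/

import Mathlib

open Matrix Filter Topology
open scoped ComplexOrder

private lemma im_qf_eq_zero {n : Type*} [Fintype n] {M : Matrix n n ℂ}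
    (hM : M.IsHermitian) (x : n → ℂ) : (star x ⬝ᵥ M *ᵥ x).im = 0 := by
  have h : star (star x ⬝ᵥ M *ᵥ x) = star x ⬝ᵥ M *ᵥ x := by
    conv_lhs => rw [star_dotProduct, star_star, star_mulVec, ← dotProduct_mulVec, hM.eq]
  rw [Complex.star_def] at h
  exact (Complex.conj_eq_iff_im.mp h)

private lemma posDef_of_re {n : Type*} [Fintype n] {M : Matrix n n ℂ} (hM : M.IsHermitian)
    (h : ∀ x : n → ℂ, x ≠ 0 → 0 < (star x ⬝ᵥ M *ᵥ x).re) : M.PosDef :=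
  Matrix.PosDef.of_dotProduct_mulVec_pos hM (fun x hx => by
    rw [Complex.lt_def]
    refine ⟨by simpa using h x hx, by simpa using (im_qf_eq_zero hM x).symm⟩)

private lemma tendsto_entry {ι m n' : Type*} {l : Filter ι} {F : ι → Matrix m n' ℂ}
    {G : Matrix m n' ℂ} (h : Tendsto F l (𝓝 G)) (a : m) (b : n') :
    Tendsto (fun t => F t a b) l (𝓝 (G a b)) := by
  have h1 : Tendsto (fun t => F t a) l (𝓝 (G a)) := (tendsto_pi_nhds.mp h) a
  exact (tendsto_pi_nhds.mp h1) b

private lemma rayleigh_bound {n : Type*} [Fintype n] {L : Matrix n n ℂ} (hL : L.PosDef) :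
    ∃ ε : ℝ, 0 < ε ∧ ∀ x : n → ℂ, ε * ∑ i, ‖x i‖ ^ 2 ≤ (star x ⬝ᵥ L.mulVec x).re := by
  rcases isEmpty_or_nonempty n with hn | hn
  · exact ⟨1, one_pos, fun x => by simp [dotProduct]⟩
  · classical
    haveI : Nontrivial (EuclideanSpace ℂ n) := by
      refine ⟨⟨0, EuclideanSpace.single (Classical.arbitrary n) 1, fun h => ?_⟩⟩
      have h2 := congrArg (fun v : EuclideanSpace ℂ n => v (Classical.arbitrary n)) h
      rw [EuclideanSpace.single_apply] at h2
      simp at h2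
    have hg : Continuous fun x : n → ℂ => (star x ⬝ᵥ L.mulVec x).re := by
      apply Complex.continuous_re.comp
      show Continuous fun x : n → ℂ => ∑ i, star (x i) * ∑ j, L i j * x j
      fun_prop
    have hf : Continuous fun x : EuclideanSpace ℂ n => (star (x : n → ℂ) ⬝ᵥ L.mulVec x).re :=
      hg.comp (EuclideanSpace.equiv n ℂ).continuous
    obtain ⟨x₀, hx₀S, hmin⟩ := (isCompact_sphere (0 : EuclideanSpace ℂ n) 1).exists_isMinOn
      (NormedSpace.sphere_nonempty.mpr zero_le_one) hf.continuousOn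
    have hx₀norm : ‖x₀‖ = 1 := by simpa using mem_sphere_zero_iff_norm.mp hx₀S
    have hx₀ne : (x₀ : n → ℂ) ≠ 0 := by
      intro h
      have : x₀ = 0 := by ext i; exact congrFun h i
      rw [this] at hx₀norm; simp at hx₀norm
    refine ⟨(star (x₀ : n → ℂ) ⬝ᵥ L.mulVec x₀).re, ?_, fun x => ?_⟩
    · have := hL.re_dotProduct_pos hx₀ne
      simpa [RCLike.re] using this
    · rcases eq_or_ne x 0 with rfl | hx
      · simp
      · set X : EuclideanSpace ℂ n := WithLp.toLp 2 x with hX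
        have hXne : X ≠ 0 := fun h => hx (by simpa [hX] using congrArg WithLp.ofLp h)
        have hr : 0 < ‖X‖ := norm_pos_iff.mpr hXne
        set cc : ℂ := ((‖X‖⁻¹ : ℝ) : ℂ) with hcc
        set Y : EuclideanSpace ℂ n := cc • X with hY
        have hy : Y ∈ Metric.sphere (0 : EuclideanSpace ℂ n) 1 := by
          rw [mem_sphere_zero_iff_norm, hY, norm_smul]
          simp [hcc, abs_of_pos hr, inv_mul_cancel₀ hr.ne']
        have hYfun : (Y : n → ℂ) = cc • x := rfl
        have hstar : star cc * cc = ((‖X‖⁻¹ ^ 2 : ℝ) : ℂ) := by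
          rw [hcc, Complex.star_def, Complex.conj_ofReal]
          push_cast; ring
        have hQ : (star (Y : n → ℂ) ⬝ᵥ L.mulVec Y).re
            = (‖X‖⁻¹) ^ 2 * (star x ⬝ᵥ L.mulVec x).re := by
          rw [hYfun, star_smul, smul_dotProduct, mulVec_smul, dotProduct_smul,
            smul_eq_mul, smul_eq_mul, ← mul_assoc, hstar, Complex.re_ofReal_mul]
        have hle : (star (x₀ : n → ℂ) ⬝ᵥ L.mulVec x₀).re
            ≤ (star (Y : n → ℂ) ⬝ᵥ L.mulVec Y).re := hmin hy
        rw [hQ] at hle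
        have hnormsq : ‖X‖ ^ 2 = ∑ i, ‖x i‖ ^ 2 := by
          rw [hX, EuclideanSpace.norm_eq,
            Real.sq_sqrt (Finset.sum_nonneg fun i _ => sq_nonneg _)]
        have h2 := mul_le_mul_of_nonneg_right hle (le_of_lt (pow_pos hr 2))
        rw [mul_comm ((‖X‖⁻¹) ^ 2) _, mul_assoc] at h2
        have hcancel : (‖X‖⁻¹) ^ 2 * ‖X‖ ^ 2 = 1 := by
          rw [← mul_pow, inv_mul_cancel₀ hr.ne']; norm_num
        rw [hcancel, mul_one] at h2
        calc (star (x₀ : n → ℂ) ⬝ᵥ L.mulVec x₀).re * ∑ i, ‖x i‖ ^ 2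
            = (star (x₀ : n → ℂ) ⬝ᵥ L.mulVec x₀).re * ‖X‖ ^ 2 := by rw [hnormsq]
          _ ≤ (star x ⬝ᵥ L.mulVec x).re := h2

private lemma eventually_posDef {ι n : Type*} [Fintype n] {l : Filter ι}
    {M : ι → Matrix n n ℂ} {L : Matrix n n ℂ}
    (hherm : ∀ᶠ t in l, (M t).IsHermitian) (htend : Tendsto M l (𝓝 L)) (hL : L.PosDef) :
    ∀ᶠ t in l, (M t).PosDef := by
  classical
  obtain ⟨ε, hε, hray⟩ := rayleigh_bound hL
  set N : ℝ := (Fintype.card n : ℝ) with hN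
  have hN0 : 0 ≤ N := Nat.cast_nonneg _
  set δ : ℝ := ε / (2 * (N + 1)) with hδdef
  have hδ : 0 < δ := by positivity
  have hsmall : ∀ᶠ t in l, ∀ i j, ‖M t i j - L i j‖ < δ := by
    rw [eventually_all]; intro i; rw [eventually_all]; intro j
    have h1 := Metric.tendsto_nhds.mp (tendsto_entry htend i j) δ hδ
    simpa [dist_eq_norm] using h1
  filter_upwards [hherm, hsmall] with t hHt hs
  refine posDef_of_re hHt (fun x hx => ?_)
  set S1 : ℝ := ∑ i, ‖x i‖ with hS1
  set S2 : ℝ := ∑ i, ‖x i‖ ^ 2 with hS2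
  have hS2pos : 0 < S2 := by
    obtain ⟨i, hi⟩ := Function.ne_iff.mp hx
    refine Finset.sum_pos' (fun j _ => sq_nonneg _) ⟨i, Finset.mem_univ i, ?_⟩
    have : 0 < ‖x i‖ := norm_pos_iff.mpr hi
    positivity
  -- bound on perturbation
  have hΔ : |(star x ⬝ᵥ (M t - L) *ᵥ x).re| ≤ δ * (N * S2) := by
    have h0 : |(star x ⬝ᵥ (M t - L) *ᵥ x).re| ≤ ‖star x ⬝ᵥ (M t - L) *ᵥ x‖ :=
      Complex.abs_re_le_norm _
    have h1 : ‖star x ⬝ᵥ (M t - L) *ᵥ x‖ ≤ ∑ i, ‖x i‖ * (δ * S1) := by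
      refine le_trans (norm_sum_le _ _) (Finset.sum_le_sum fun i _ => ?_)
      rw [norm_mul]
      simp only [Pi.star_apply, norm_star]
      refine mul_le_mul_of_nonneg_left ?_ (norm_nonneg _)
      refine le_trans (norm_sum_le _ _) ?_
      rw [hS1, Finset.mul_sum]
      refine Finset.sum_le_sum fun j _ => ?_
      rw [norm_mul]
      exact mul_le_mul_of_nonneg_right (le_of_lt (hs i j)) (norm_nonneg _)
    have h2 : ∑ i, ‖x i‖ * (δ * S1) = δ * S1 ^ 2 := by
      rw [← Finset.sum_mul, ← hS1]; ring
    have h3 : S1 ^ 2 ≤ N * S2 := by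
      have := sq_sum_le_card_mul_sum_sq (s := (Finset.univ : Finset n)) (f := fun i => ‖x i‖)
      simpa [hS1, hS2, hN] using this
    calc |(star x ⬝ᵥ (M t - L) *ᵥ x).re| ≤ ∑ i, ‖x i‖ * (δ * S1) := le_trans h0 h1
      _ = δ * S1 ^ 2 := h2
      _ ≤ δ * (N * S2) := by nlinarith
  have hsplit : (star x ⬝ᵥ M t *ᵥ x).re
      = (star x ⬝ᵥ L *ᵥ x).re + (star x ⬝ᵥ (M t - L) *ᵥ x).re := by
    rw [sub_mulVec, dotProduct_sub, Complex.sub_re]; ring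
  have hδN : δ * N ≤ ε / 2 := by
    rw [hδdef, div_mul_eq_mul_div, mul_comm]
    rw [div_le_div_iff₀ (by positivity) (by norm_num)]
    nlinarith
  have : ε * S2 - δ * (N * S2) ≤ (star x ⬝ᵥ M t *ᵥ x).re := by
    rw [hsplit]
    have := hray x
    have habs := abs_le.mp hΔ
    nlinarith [this]
  have hfinal : 0 < ε * S2 - δ * (N * S2) := by nlinarith
  linarith

private lemma posDef_conj {n : Type*} [Fintype n] {M : Matrix n n ℂ} (hM : M.PosDef)
    {S : Matrix n n ℂ} (hS : ∀ x : n → ℂ, x ≠ 0 → S *ᵥ x ≠ 0) : (Sᴴ * M * S).PosDef := by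
  refine Matrix.PosDef.of_dotProduct_mulVec_pos (Matrix.isHermitian_conjTranspose_mul_mul S hM.1) fun x hx => ?_
  simpa only [star_mulVec, dotProduct_mulVec, vecMul_vecMul] using hM.dotProduct_mulVec_pos (hS x hx)

private lemma posDef_blockDiag {m n' : Type*} [Fintype m] [Fintype n']
    {A : Matrix m m ℂ} {D : Matrix n' n' ℂ} (hA : A.PosDef) (hD : D.PosDef) :
    (Matrix.fromBlocks A 0 0 D).PosDef := by
  refine Matrix.PosDef.of_dotProduct_mulVec_pos ?_ ?_
  · rw [Matrix.IsHermitian, Matrix.fromBlocks_conjTranspose, hA.1, hD.1]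
    simp
  · intro x hx
    have key : star x ⬝ᵥ (Matrix.fromBlocks A 0 0 D) *ᵥ x
        = star (x ∘ Sum.inl) ⬝ᵥ A *ᵥ (x ∘ Sum.inl) + star (x ∘ Sum.inr) ⬝ᵥ D *ᵥ (x ∘ Sum.inr) := by
      conv_lhs => rw [← Sum.elim_comp_inl_inr x]
      rw [Matrix.fromBlocks_mulVec]
      simp only [Matrix.zero_mulVec, add_zero, zero_add]
      have hstar : star (Sum.elim (x ∘ Sum.inl) (x ∘ Sum.inr))
          = Sum.elim (star (x ∘ Sum.inl)) (star (x ∘ Sum.inr)) := by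
        ext i; cases i <;> rfl
      rw [hstar, sumElim_dotProduct_sumElim]
      simp [Sum.elim_comp_inl, Sum.elim_comp_inr]
    rw [key]
    have hcases : x ∘ Sum.inl ≠ 0 ∨ x ∘ Sum.inr ≠ 0 := by
      by_contra h
      push_neg at h
      apply hx
      ext i
      cases i with
      | inl a => exact congrFun h.1 a
      | inr b => exact congrFun h.2 b
    rcases hcases with h | h
    · exact add_pos_of_pos_of_nonneg (hA.dotProduct_mulVec_pos h) (hD.posSemidef.dotProduct_mulVec_nonneg _)
    · exact add_pos_of_nonneg_of_pos (hA.posSemidef.dotProduct_mulVec_nonneg _) (hD.dotProduct_mulVec_pos h)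

private lemma posDef_scalar {k : ℝ} (hk : 0 < k) :
    (Matrix.of fun (_ : Fin 1) (_ : Fin 1) => (k : ℂ)).PosDef := by
  refine Matrix.PosDef.of_dotProduct_mulVec_pos ?_ ?_
  · ext i j
    simp [Matrix.conjTranspose_apply, Complex.conj_ofReal]
  · intro x hx
    have hx0 : x 0 ≠ 0 := by
      intro h; apply hx; ext i; fin_cases i; exact h
    have key : star x ⬝ᵥ (Matrix.of fun (_ : Fin 1) (_ : Fin 1) => (k : ℂ)) *ᵥ x
        = ((k * Complex.normSq (x 0) : ℝ) : ℂ) := by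
      simp only [Matrix.mulVec, dotProduct, Fin.sum_univ_one, Matrix.of_apply,
        Pi.star_apply]
      rw [Complex.star_def]
      push_cast [Complex.normSq_eq_conj_mul_self]
      ring
    rw [key, Complex.zero_lt_real]
    exact mul_pos hk (Complex.normSq_pos.mpr hx0)

private lemma posSemidef_real_smul {n : Type*} [Fintype n] {M : Matrix n n ℂ}
    (hM : M.PosSemidef) {k : ℝ} (hk : 0 ≤ k) : ((k : ℂ) • M).PosSemidef := by
  refine Matrix.PosSemidef.of_dotProduct_mulVec_nonneg ?_ ?_
  · rw [Matrix.IsHermitian, Matrix.conjTranspose_smul, hM.1]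
    congr 1
    simp [Complex.star_def, Complex.conj_ofReal]
  · intro x
    rw [Matrix.smul_mulVec, dotProduct_smul, smul_eq_mul]
    exact mul_nonneg (Complex.zero_le_real.mpr hk) (hM.dotProduct_mulVec_nonneg x)

private lemma isHermitian_smul_real {n : Type*} {M : Matrix n n ℂ} (hM : M.IsHermitian)
    (z : ℂ) (hz : star z = z) : (z • M).IsHermitian := by
  rw [Matrix.IsHermitian, Matrix.conjTranspose_smul, hz, hM.eq]

/-- Asymptotic positivity of a family of Hermitian block matrices
`H(t) = [[A(t), B(t), c(t)], [B(t)*, D(t)/t, E(t)/t], [c(t)*, E(t)*/t, d(t)/t²]]`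
whose blocks converge as `t → 0⁺`: if the Schur complement `A - c c*/d` is positive
definite and `D` is positive definite, then `H(t)` is positive definite for all
sufficiently small `t > 0`. -/
theorem stmt_10 (r s : ℕ) (t₀ : ℝ) (ht₀ : 0 < t₀)
    (A : ℝ → Matrix (Fin r) (Fin r) ℂ) (B : ℝ → Matrix (Fin r) (Fin s) ℂ)
    (c : ℝ → Matrix (Fin r) (Fin 1) ℂ) (D : ℝ → Matrix (Fin s) (Fin s) ℂ)
    (E : ℝ → Matrix (Fin s) (Fin 1) ℂ) (d : ℝ → ℝ)
    (H : ℝ → Matrix ((Fin r ⊕ Fin s) ⊕ Fin 1) ((Fin r ⊕ Fin s) ⊕ Fin 1) ℂ)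
    (hH : ∀ t ∈ Set.Ioo (0 : ℝ) t₀,
      H t = Matrix.fromBlocks
        (Matrix.fromBlocks (A t) (B t) (B t)ᴴ (((t : ℂ)⁻¹) • D t))
        (Matrix.fromRows (c t) (((t : ℂ)⁻¹) • E t))
        (Matrix.fromRows (c t) (((t : ℂ)⁻¹) • E t))ᴴ
        ((((t : ℂ) ^ 2)⁻¹) • Matrix.of fun (_ : Fin 1) (_ : Fin 1) => (d t : ℂ)))
    (hAh : ∀ t ∈ Set.Ioo (0 : ℝ) t₀, (A t).IsHermitian)
    (hDh : ∀ t ∈ Set.Ioo (0 : ℝ) t₀, (D t).IsHermitian)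
    (Alim : Matrix (Fin r) (Fin r) ℂ) (Blim : Matrix (Fin r) (Fin s) ℂ)
    (clim : Matrix (Fin r) (Fin 1) ℂ) (Dlim : Matrix (Fin s) (Fin s) ℂ)
    (Elim : Matrix (Fin s) (Fin 1) ℂ) (dlim : ℝ)
    (hA : Tendsto A (𝓝[>] (0 : ℝ)) (𝓝 Alim))
    (hB : Tendsto B (𝓝[>] (0 : ℝ)) (𝓝 Blim))
    (hc : Tendsto c (𝓝[>] (0 : ℝ)) (𝓝 clim))
    (hD : Tendsto D (𝓝[>] (0 : ℝ)) (𝓝 Dlim))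
    (hE : Tendsto E (𝓝[>] (0 : ℝ)) (𝓝 Elim))
    (hd : Tendsto d (𝓝[>] (0 : ℝ)) (𝓝 dlim)) (hdpos : 0 < dlim)
    (hSchur : (Alim - ((dlim : ℂ)⁻¹) • (clim * climᴴ)).PosDef)
    (hDlim : Dlim.PosDef) :
    ∃ t₁ : ℝ, 0 < t₁ ∧ ∀ t : ℝ, 0 < t → t < min t₁ t₀ → (H t).PosDef := by
  classical
  set σ : ℝ → ((Fin r ⊕ Fin s) ⊕ Fin 1) → ℂ := fun t => Sum.elim
    (Sum.elim (fun _ => (1 : ℂ)) (fun _ => ((Real.sqrt t : ℝ) : ℂ)))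
    (fun _ => ((t : ℝ) : ℂ)) with hσdef
  set M : ℝ → Matrix ((Fin r ⊕ Fin s) ⊕ Fin 1) ((Fin r ⊕ Fin s) ⊕ Fin 1) ℂ :=
    fun t => (Matrix.diagonal (σ t))ᴴ * H t * Matrix.diagonal (σ t) with hMdef
  set L : Matrix ((Fin r ⊕ Fin s) ⊕ Fin 1) ((Fin r ⊕ Fin s) ⊕ Fin 1) ℂ :=
    Matrix.fromBlocks (Matrix.fromBlocks Alim 0 0 Dlim) 0 0
      (Matrix.of fun _ _ => (dlim : ℂ)) with hLdef
  have hIoo : ∀ᶠ t in 𝓝[>] (0 : ℝ), t ∈ Set.Ioo (0 : ℝ) t₀ :=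
    Ioo_mem_nhdsGT_of_mem ⟨le_refl 0, ht₀⟩
  -- H t is Hermitian on Ioo
  have hHerm : ∀ t ∈ Set.Ioo (0 : ℝ) t₀, (H t).IsHermitian := by
    intro t ht
    rw [hH t ht]
    have hst : star ((t : ℂ)⁻¹) = (t : ℂ)⁻¹ := by
      simp [Complex.star_def, map_inv₀, Complex.conj_ofReal]
    have hst2 : star (((t : ℂ) ^ 2)⁻¹) = ((t : ℂ) ^ 2)⁻¹ := by
      simp [Complex.star_def, map_inv₀, map_pow, Complex.conj_ofReal]
    refine Matrix.IsHermitian.fromBlocks ?_ rfl ?_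
    · exact Matrix.IsHermitian.fromBlocks (hAh t ht) rfl
        (isHermitian_smul_real (hDh t ht) _ hst)
    · refine isHermitian_smul_real ?_ _ hst2
      ext i j
      simp [Matrix.conjTranspose_apply, Complex.conj_ofReal]
  have hMherm : ∀ᶠ t in 𝓝[>] (0 : ℝ), (M t).IsHermitian := by
    filter_upwards [hIoo] with t ht
    exact Matrix.isHermitian_conjTranspose_mul_mul _ (hHerm t ht)
  -- entry formula
  have hMentry : ∀ (t : ℝ) i j, M t i j = star (σ t i) * H t i j * σ t j := by
    intro t i j
    rw [hMdef]
    simp only [Matrix.diagonal_conjTranspose, Matrix.mul_diagonal, Matrix.diagonal_mul,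
      Pi.star_apply]
  -- auxiliary limits
  have hts : Tendsto (fun t : ℝ => ((Real.sqrt t : ℝ) : ℂ)) (𝓝[>] (0 : ℝ)) (𝓝 0) := by
    have h1 : Tendsto Real.sqrt (𝓝[>] (0 : ℝ)) (𝓝 0) := by
      simpa [Real.sqrt_zero] using
        (Real.continuous_sqrt.tendsto 0).mono_left nhdsWithin_le_nhds
    exact (Complex.continuous_ofReal.tendsto 0).comp h1
  have htt : Tendsto (fun t : ℝ => ((t : ℝ) : ℂ)) (𝓝[>] (0 : ℝ)) (𝓝 0) := by
    simpa using (Complex.continuous_ofReal.tendsto 0).comp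
      (tendsto_id.mono_left nhdsWithin_le_nhds)
  -- convergence of M to L
  have htendM : Tendsto M (𝓝[>] (0 : ℝ)) (𝓝 L) := by
    refine tendsto_pi_nhds.mpr ?_
    intro i
    rw [tendsto_pi_nhds]
    intro j
    obtain (a | a) | a := i <;> obtain (b | b) | b := j
    · -- A block
      have hev : (fun t => A t a b) =ᶠ[𝓝[>] (0:ℝ)] fun t => M t (Sum.inl (Sum.inl a)) (Sum.inl (Sum.inl b)) := by
        filter_upwards [hIoo] with t ht
        rw [hMentry, hH t ht]
        simp [hσdef, Matrix.fromBlocks]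
      have hL' : L (Sum.inl (Sum.inl a)) (Sum.inl (Sum.inl b)) = Alim a b := by
        simp [hLdef, Matrix.fromBlocks]
      rw [hL']
      exact Tendsto.congr' hev (tendsto_entry hA a b)
    · -- B block
      have hev : (fun t => B t a b * ((Real.sqrt t : ℝ) : ℂ)) =ᶠ[𝓝[>] (0:ℝ)]
          fun t => M t (Sum.inl (Sum.inl a)) (Sum.inl (Sum.inr b)) := by
        filter_upwards [hIoo] with t ht
        rw [hMentry, hH t ht]
        simp [hσdef, Matrix.fromBlocks]
      have hL' : L (Sum.inl (Sum.inl a)) (Sum.inl (Sum.inr b)) = 0 := by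
        simp [hLdef, Matrix.fromBlocks]
      rw [hL']
      refine Tendsto.congr' hev ?_
      simpa using (tendsto_entry hB a b).mul hts
    · -- c block
      have hev : (fun t => c t a b * ((t : ℝ) : ℂ)) =ᶠ[𝓝[>] (0:ℝ)]
          fun t => M t (Sum.inl (Sum.inl a)) (Sum.inr b) := by
        filter_upwards [hIoo] with t ht
        rw [hMentry, hH t ht]
        simp [hσdef, Matrix.fromBlocks, Matrix.fromRows_apply_inl]
      have hL' : L (Sum.inl (Sum.inl a)) (Sum.inr b) = 0 := by
        simp [hLdef, Matrix.fromBlocks]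
      rw [hL']
      refine Tendsto.congr' hev ?_
      simpa using (tendsto_entry hc a b).mul htt
    · -- Bᴴ block
      have hev : (fun t => (starRingEnd ℂ) (B t b a) * ((Real.sqrt t : ℝ) : ℂ)) =ᶠ[𝓝[>] (0:ℝ)]
          fun t => M t (Sum.inl (Sum.inr a)) (Sum.inl (Sum.inl b)) := by
        filter_upwards [hIoo] with t ht
        rw [hMentry, hH t ht]
        simp [hσdef, Matrix.fromBlocks, Matrix.conjTranspose_apply, Complex.conj_ofReal]
        ring
      have hL' : L (Sum.inl (Sum.inr a)) (Sum.inl (Sum.inl b)) = 0 := by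
        simp [hLdef, Matrix.fromBlocks]
      rw [hL']
      refine Tendsto.congr' hev ?_
      have h1 : Tendsto (fun t => (starRingEnd ℂ) (B t b a)) (𝓝[>] (0:ℝ))
          (𝓝 ((starRingEnd ℂ) (Blim b a))) :=
        (Complex.continuous_conj.tendsto _).comp (tendsto_entry hB b a)
      simpa using h1.mul hts
    · -- D block
      have hev : (fun t => D t a b) =ᶠ[𝓝[>] (0:ℝ)]
          fun t => M t (Sum.inl (Sum.inr a)) (Sum.inl (Sum.inr b)) := by
        filter_upwards [hIoo] with t ht
        rw [hMentry, hH t ht]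
        have ht0 : (t : ℂ) ≠ 0 := Complex.ofReal_ne_zero.mpr ht.1.ne'
        have h2 : ((Real.sqrt t : ℝ) : ℂ) * ((Real.sqrt t : ℝ) : ℂ) = (t : ℂ) := by
          rw [← Complex.ofReal_mul, Real.mul_self_sqrt ht.1.le]
        simp [hσdef, Matrix.fromBlocks, Matrix.smul_apply, smul_eq_mul, Complex.conj_ofReal]
        field_simp
        linear_combination (-(D t a b)) * h2
      have hL' : L (Sum.inl (Sum.inr a)) (Sum.inl (Sum.inr b)) = Dlim a b := by
        simp [hLdef, Matrix.fromBlocks]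
      rw [hL']
      exact Tendsto.congr' hev (tendsto_entry hD a b)
    · -- E block
      have hev : (fun t => E t a b * ((Real.sqrt t : ℝ) : ℂ)) =ᶠ[𝓝[>] (0:ℝ)]
          fun t => M t (Sum.inl (Sum.inr a)) (Sum.inr b) := by
        filter_upwards [hIoo] with t ht
        rw [hMentry, hH t ht]
        have ht0 : (t : ℂ) ≠ 0 := Complex.ofReal_ne_zero.mpr ht.1.ne'
        simp [hσdef, Matrix.fromBlocks, Matrix.fromRows_apply_inr, Matrix.smul_apply,
          smul_eq_mul, Complex.conj_ofReal]
        field_simp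
      have hL' : L (Sum.inl (Sum.inr a)) (Sum.inr b) = 0 := by
        simp [hLdef, Matrix.fromBlocks]
      rw [hL']
      refine Tendsto.congr' hev ?_
      simpa using (tendsto_entry hE a b).mul hts
    · -- cᴴ block
      have hev : (fun t => (starRingEnd ℂ) (c t b a) * ((t : ℝ) : ℂ)) =ᶠ[𝓝[>] (0:ℝ)]
          fun t => M t (Sum.inr a) (Sum.inl (Sum.inl b)) := by
        filter_upwards [hIoo] with t ht
        rw [hMentry, hH t ht]
        simp [hσdef, Matrix.fromBlocks, Matrix.conjTranspose_apply,
          Matrix.fromRows_apply_inl, Complex.conj_ofReal]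
        ring
      have hL' : L (Sum.inr a) (Sum.inl (Sum.inl b)) = 0 := by
        simp [hLdef, Matrix.fromBlocks]
      rw [hL']
      refine Tendsto.congr' hev ?_
      have h1 : Tendsto (fun t => (starRingEnd ℂ) (c t b a)) (𝓝[>] (0:ℝ))
          (𝓝 ((starRingEnd ℂ) (clim b a))) :=
        (Complex.continuous_conj.tendsto _).comp (tendsto_entry hc b a)
      simpa using h1.mul htt
    · -- Eᴴ block
      have hev : (fun t => (starRingEnd ℂ) (E t b a) * ((Real.sqrt t : ℝ) : ℂ)) =ᶠ[𝓝[>] (0:ℝ)]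
          fun t => M t (Sum.inr a) (Sum.inl (Sum.inr b)) := by
        filter_upwards [hIoo] with t ht
        rw [hMentry, hH t ht]
        have ht0 : (t : ℂ) ≠ 0 := Complex.ofReal_ne_zero.mpr ht.1.ne'
        simp [hσdef, Matrix.fromBlocks, Matrix.conjTranspose_apply,
          Matrix.fromRows_apply_inr, Matrix.smul_apply, smul_eq_mul, Complex.conj_ofReal,
          map_inv₀]
        field_simp
        simp
      have hL' : L (Sum.inr a) (Sum.inl (Sum.inr b)) = 0 := by
        simp [hLdef, Matrix.fromBlocks]
      rw [hL']
      refine Tendsto.congr' hev ?_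
      have h1 : Tendsto (fun t => (starRingEnd ℂ) (E t b a)) (𝓝[>] (0:ℝ))
          (𝓝 ((starRingEnd ℂ) (Elim b a))) :=
        (Complex.continuous_conj.tendsto _).comp (tendsto_entry hE b a)
      simpa using h1.mul hts
    · -- d block
      have hev : (fun t => ((d t : ℝ) : ℂ)) =ᶠ[𝓝[>] (0:ℝ)]
          fun t => M t (Sum.inr a) (Sum.inr b) := by
        filter_upwards [hIoo] with t ht
        rw [hMentry, hH t ht]
        have ht0 : (t : ℂ) ≠ 0 := Complex.ofReal_ne_zero.mpr ht.1.ne'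
        simp [hσdef, Matrix.fromBlocks, Matrix.smul_apply, smul_eq_mul, Complex.conj_ofReal]
        field_simp
      have hL' : L (Sum.inr a) (Sum.inr b) = (dlim : ℂ) := by
        simp [hLdef, Matrix.fromBlocks]
      rw [hL']
      refine Tendsto.congr' hev ?_
      exact (Complex.continuous_ofReal.tendsto dlim).comp hd
  -- L is positive definite
  have hAlim : Alim.PosDef := by
    have e : Alim = (Alim - ((dlim : ℂ)⁻¹) • (clim * climᴴ)) + ((dlim : ℂ)⁻¹) • (clim * climᴴ) :=
      (sub_add_cancel _ _).symm
    rw [e]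
    refine hSchur.add_posSemidef ?_
    have hcast : ((dlim : ℂ))⁻¹ = (((dlim⁻¹ : ℝ)) : ℂ) := by push_cast; ring
    rw [hcast]
    exact posSemidef_real_smul (Matrix.posSemidef_self_mul_conjTranspose clim)
      (inv_nonneg.mpr hdpos.le)
  have hLpos : L.PosDef := posDef_blockDiag (posDef_blockDiag hAlim hDlim) (posDef_scalar hdpos)
  -- eventually M t posdef
  have hevent : ∀ᶠ t in 𝓝[>] (0 : ℝ), (M t).PosDef ∧ t ∈ Set.Ioo (0 : ℝ) t₀ :=
    (eventually_posDef hMherm htendM hLpos).and hIoo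
  obtain ⟨u, hu, hsub⟩ := mem_nhdsGT_iff_exists_Ioo_subset.mp hevent
  refine ⟨u, hu, fun t ht0 htlt => ?_⟩
  obtain ⟨hMt, htIoo⟩ := hsub ⟨ht0, lt_of_lt_of_le htlt (min_le_left _ _)⟩
  have hne : ∀ i, σ t i ≠ 0 := by
    intro i
    obtain (a | a) | a := i
    · simp [hσdef]
    · have h3 : Real.sqrt t ≠ 0 := ne_of_gt (Real.sqrt_pos.mpr ht0)
      simpa [hσdef, Complex.ofReal_ne_zero] using h3
    · simpa [hσdef, Complex.ofReal_ne_zero] using ht0.ne'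
  set S : Matrix ((Fin r ⊕ Fin s) ⊕ Fin 1) ((Fin r ⊕ Fin s) ⊕ Fin 1) ℂ :=
    Matrix.diagonal (fun i => (σ t i)⁻¹) with hSdef
  have hDS : Matrix.diagonal (σ t) * S = 1 := by
    have hfun : (fun i => σ t i * (σ t i)⁻¹) = fun _ => (1 : ℂ) :=
      funext fun i => mul_inv_cancel₀ (hne i)
    rw [hSdef, Matrix.diagonal_mul_diagonal, hfun, Matrix.diagonal_one]
  have hconj : Sᴴ * M t * S = H t := by
    rw [hMdef]
    calc Sᴴ * ((Matrix.diagonal (σ t))ᴴ * H t * Matrix.diagonal (σ t)) * S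
        = (Matrix.diagonal (σ t) * S)ᴴ * H t * (Matrix.diagonal (σ t) * S) := by
          rw [Matrix.conjTranspose_mul]
          simp only [Matrix.mul_assoc]
      _ = H t := by rw [hDS]; simp
  have hSmv : ∀ x : ((Fin r ⊕ Fin s) ⊕ Fin 1) → ℂ, x ≠ 0 → S *ᵥ x ≠ 0 := by
    intro x hx h
    apply hx
    funext i
    have h2 := congrFun h i
    simp only [Pi.zero_apply] at h2
    rw [hSdef, Matrix.mulVec_diagonal] at h2
    have h4 := (mul_eq_zero.mp h2).resolve_left (inv_ne_zero (hne i))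
    simpa using h4
  rw [← hconj]
  exact posDef_conj hMt hSmv
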